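/- For z = x + iy ∈ ℍ and δ > 0, the map p: [r : l : s] ↦ (l + i√(δ⁻¹ r s − l²))/r from the projectivization of the negative cone of q(r,l,s) = δl² − rs to ℍ is inverse to the map (x, y) ↦ [1 : x : δ(x² + y²)]. In particular, composing the two maps in either order gives the identity on their respective domains. -/

import Mathlib

/-- The map `p : [r : l : s] ↦ (l + i√(δ⁻¹rs − l²))/r` from the (projectivized, normalized so
that `r > 0`) negative cone of `q(r,l,s) = δl² − rs` to the upper half plane is inverse to the
map `(x, y) ↦ [1 : x : δ(x² + y²)]`: both composites are the identity. -/
theorem stmt_7 (δ : ℝ) (hδ : 0 < δ) :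
    (∀ x y : ℝ, 0 < y →
      δ * x ^ 2 - 1 * (δ * (x ^ 2 + y ^ 2)) < 0 ∧
      ((x : ℂ) + (Real.sqrt (δ⁻¹ * 1 * (δ * (x ^ 2 + y ^ 2)) - x ^ 2) : ℝ) * Complex.I) / 1
        = (x : ℂ) + (y : ℝ) * Complex.I) ∧
    (∀ r l s : ℝ, 0 < r → δ * l ^ 2 - r * s < 0 →
      0 < Real.sqrt (δ⁻¹ * r * s - l ^ 2) / r ∧
      r * (l / r) = l ∧
      r * (δ * ((l / r) ^ 2 + (Real.sqrt (δ⁻¹ * r * s - l ^ 2) / r) ^ 2)) = s) := by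
  constructor
  · intro x y hy
    constructor
    · nlinarith [mul_pos hδ (pow_pos hy 2)]
    · have h1 : δ⁻¹ * 1 * (δ * (x ^ 2 + y ^ 2)) - x ^ 2 = y ^ 2 := by
        field_simp
        ring
      rw [h1, Real.sqrt_sq hy.le, div_one]
  · intro r l s hr hq
    have hpos : 0 < δ⁻¹ * r * s - l ^ 2 := by
      have h := mul_pos (inv_pos.mpr hδ) (show 0 < r * s - δ * l ^ 2 by linarith)
      rw [mul_sub] at h
      have : δ⁻¹ * (δ * l ^ 2) = l ^ 2 := by field_simp
      nlinarith [h]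
    have hsq : Real.sqrt (δ⁻¹ * r * s - l ^ 2) ^ 2 = δ⁻¹ * r * s - l ^ 2 :=
      Real.sq_sqrt hpos.le
    refine ⟨div_pos (Real.sqrt_pos.mpr hpos) hr, by field_simp, ?_⟩
    rw [div_pow, div_pow, hsq]
    field_simp
    ring
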